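/- For every finite set of points x_1 ≤ x_2 ≤ … ≤ x_n on the real line (with the Euclidean distance d(x,y)=|x−y|) and every integer k with 1 ≤ k ≤ n, there exists an IP-stable k-clustering of {x_1,…,x_n}; moreover, such a clustering can be chosen so that every cluster is contiguous, i.e., each cluster is a set of consecutive points {x_a, x_{a+1}, …, x_b}. -/

import Mathlib

open Finset

/-- A point `x` is IP-stable in the clustering `C` (w.r.t. dissimilarity `d`):
for the cluster containing `x`, either it is the singleton `{x}`, or the average
distance of `x` to its own cluster (itself excluded) is at most its average
distance to every other cluster. -/
def IPStablePt {α : Type*} [DecidableEq α] (d : α → α → ℝ) {k : ℕ}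
    (C : Fin k → Finset α) (x : α) : Prop :=
  ∀ i : Fin k, x ∈ C i →
    (C i = {x} ∨
      ∀ j : Fin k, C j ≠ C i →
        (∑ y ∈ C i, d x y) / ((C i).card - 1 : ℝ) ≤
          (∑ y ∈ C j, d x y) / ((C j).card : ℝ))

/-- `C` is a `k`-clustering of the finite set `D`: a partition of `D` into `k`
nonempty clusters. -/
def IsClustering {α : Type*} [DecidableEq α] (D : Finset α) {k : ℕ}
    (C : Fin k → Finset α) : Prop :=
  (∀ i, (C i).Nonempty) ∧ (∀ i j, i ≠ j → Disjoint (C i) (C j)) ∧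
    Finset.univ.biUnion C = D

namespace IPAux

/-- Right condition: last point of `B` does not prefer cluster `C` (to its right). -/
def Rc (B C : List ℝ) : Prop :=
  2 ≤ B.length →
    ((B.length : ℝ) * B.getLastD 0 - B.sum) / ((B.length : ℝ) - 1)
      ≤ C.sum / (C.length : ℝ) - B.getLastD 0

/-- Left condition: first point of `C` does not prefer cluster `B` (to its left). -/
def Lc (B C : List ℝ) : Prop :=
  2 ≤ C.length →
    (C.sum - (C.length : ℝ) * C.headI) / ((C.length : ℝ) - 1)
      ≤ C.headI - B.sum / (B.length : ℝ)

lemma getLastD_ne_nil {l : List ℝ} (h : l ≠ []) (d d' : ℝ) :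
    l.getLastD d = l.getLastD d' := by
  rw [List.getLastD_eq_getLast?, List.getLastD_eq_getLast?]
  cases hl : l.getLast? with
  | none => exact absurd (List.getLast?_eq_none_iff.mp hl) h
  | some a => rfl

lemma lenR_pos {l : List ℝ} (h : l ≠ []) : (0:ℝ) < l.length := by
  have := List.length_pos_iff.mpr h
  exact_mod_cast this

/-- growing the right cluster on the right keeps `Rc`. -/
lemma Rc_grow {X B : List ℝ} {q : ℝ} (hB : B ≠ []) (hq : B.sum ≤ (B.length : ℝ) * q)
    (h : Rc X B) : Rc X (B ++ [q]) := by
  intro h2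
  have h' := h h2
  have hl : (0:ℝ) < B.length := lenR_pos hB
  have key : B.sum / (B.length : ℝ) ≤ (B ++ [q]).sum / ((B ++ [q]).length : ℝ) := by
    simp only [List.sum_append, List.length_append, List.sum_cons, List.sum_nil,
      List.length_cons, List.length_nil, add_zero]
    rw [div_le_div_iff₀ hl (by push_cast; linarith)]
    push_cast
    nlinarith [hq]
  linarith

/-- the new pair after moving `q` left, given the violated left condition. -/
lemma Rc_new {B C' : List ℝ} {q : ℝ} (hB : B ≠ [])
    (hnot : q - B.sum / (B.length : ℝ) < C'.sum / (C'.length : ℝ) - q) :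
    Rc (B ++ [q]) C' := by
  intro _
  have hl : (0:ℝ) < B.length := lenR_pos hB
  have hlast : (B ++ [q]).getLastD 0 = q := List.getLastD_concat
  rw [hlast]
  have hlen : ((B ++ [q]).length : ℝ) = (B.length : ℝ) + 1 := by
    simp only [List.length_append, List.length_cons, List.length_nil]; push_cast; ring
  have hsum : (B ++ [q]).sum = B.sum + q := by simp
  rw [hlen, hsum]
  have : ((B.length : ℝ) + 1) * q - (B.sum + q) = (B.length : ℝ) * q - B.sum := by ring
  rw [this]
  have h2 : ((B.length : ℝ) * q - B.sum) / ((B.length : ℝ) + 1 - 1)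
      = q - B.sum / (B.length : ℝ) := by
    rw [add_sub_cancel_right, div_eq_iff (ne_of_gt hl), sub_mul, div_mul_cancel₀ _ (ne_of_gt hl)]
    ring
  rw [h2]
  linarith

/-- dropping the smallest element of the left cluster keeps `Rc`. -/
lemma Rc_shrink {q : ℝ} {C' Y : List ℝ} (hC' : C' ≠ []) (hq : ∀ y ∈ C', q ≤ y)
    (h : Rc (q :: C') Y) : Rc C' Y := by
  intro h2
  have h3 : 2 ≤ (q :: C').length := by simp only [List.length_cons]; omega
  have h' := h h3
  have hl : (0:ℝ) < C'.length := lenR_pos hC'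
  have hl2 : (2:ℝ) ≤ (C'.length : ℝ) := by exact_mod_cast h2
  set p := C'.getLastD 0 with hp
  have hlast : (q :: C').getLastD 0 = p := by
    rw [List.getLastD_cons]
    exact getLastD_ne_nil hC' q 0
  rw [hlast, List.length_cons, List.sum_cons] at h'
  push_cast at h'
  -- h' : ((C'.length + 1) * p - (q + C'.sum)) / (C'.length + 1 - 1) ≤ Y.sum / Y.length - p
  -- goal : (C'.length * p - C'.sum) / (C'.length - 1) ≤ Y.sum / Y.length - p
  have hpmem : p ∈ C' := by
    rw [hp, List.getLastD_eq_getLast?, List.getLast?_eq_getLast hC']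
    exact List.getLast_mem hC'
  have hSum : p + ((C'.length : ℝ) - 1) * q ≤ C'.sum := by
    have hdl : C'.dropLast ++ [C'.getLast hC'] = C' := List.dropLast_append_getLast hC'
    have hplast : C'.getLast hC' = p := by
      rw [hp, List.getLastD_eq_getLast?, List.getLast?_eq_getLast hC']
      rfl
    have hsum' : C'.dropLast.sum + p = C'.sum := by
      conv_rhs => rw [← hdl]
      rw [List.sum_append, hplast]; simp
    have hlow : ((C'.dropLast.length : ℝ)) * q ≤ C'.dropLast.sum := by
      have := List.card_nsmul_le_sum C'.dropLast q (fun x hx => hq x (List.dropLast_subset _ hx))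
      rw [nsmul_eq_mul] at this
      exact this
    have hlen' : (C'.dropLast.length : ℝ) = (C'.length : ℝ) - 1 := by
      rw [List.length_dropLast]
      have : 1 ≤ C'.length := List.length_pos_iff.mpr hC'
      push_cast [Nat.cast_sub this]
      ring
    rw [hlen'] at hlow
    linarith
  have step : ((C'.length : ℝ) * p - C'.sum) / ((C'.length : ℝ) - 1)
      ≤ (((C'.length : ℝ) + 1) * p - (q + C'.sum)) / ((C'.length : ℝ) + 1 - 1) := by
    rw [div_le_div_iff₀ (by linarith) (by linarith)]
    nlinarith [hSum]
  linarith

/-- extracting info from a violated left condition. -/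
lemma not_Lc {B C : List ℝ} (h : ¬ Lc B C) :
    2 ≤ C.length ∧
      C.headI - B.sum / (B.length : ℝ)
        < (C.sum - (C.length : ℝ) * C.headI) / ((C.length : ℝ) - 1) := by
  rw [Lc] at h
  push_neg at h
  exact ⟨h.1, h.2⟩


def meas : List (List ℝ) → ℕ
  | [] => 0
  | _ :: rest => rest.flatten.length + meas rest

lemma step : ∀ P : List (List ℝ),
    (∀ B ∈ P, B ≠ []) → P.flatten.Pairwise (· ≤ ·) → P.IsChain Rc → ¬ P.IsChain Lc →
    ∃ Q : List (List ℝ),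
      Q.flatten = P.flatten ∧ Q.length = P.length ∧ (∀ B ∈ Q, B ≠ []) ∧
      Q.IsChain Rc ∧ meas Q < meas P ∧
      (∀ X : List ℝ, Rc X P.headI → Rc X Q.headI) := by
  intro P
  induction P with
  | nil => intro _ _ _ hL; exact absurd List.isChain_nil hL
  | cons B tail ih =>
    cases tail with
    | nil => intro _ _ _ hL; exact absurd (List.isChain_singleton B) hL
    | cons C rest =>
      intro hne hsort hR hL
      have hBne : B ≠ [] := hne B (by simp)
      have hCne : C ≠ [] := hne C (by simp)
      have hflat : (B :: C :: rest).flatten = B ++ (C :: rest).flatten := by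
        simp [List.flatten_cons]
      have hsort' : ((C :: rest).flatten).Pairwise (· ≤ ·) := by
        rw [hflat, List.pairwise_append] at hsort
        exact hsort.2.1
      have hBle : ∀ a ∈ B, ∀ b ∈ (C :: rest).flatten, a ≤ b := by
        rw [hflat, List.pairwise_append] at hsort
        exact hsort.2.2
      have hRBC : Rc B C := (List.isChain_cons_cons.mp hR).1
      have hRtail : (C :: rest).IsChain Rc := (List.isChain_cons_cons.mp hR).2
      by_cases hLBC : Lc B C
      · -- recurse
        have hLtail : ¬ (C :: rest).IsChain Lc := fun h =>
          hL (List.isChain_cons_cons.mpr ⟨hLBC, h⟩)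
        obtain ⟨Q', hfl, hlen, hne', hR', hm', hhead⟩ :=
          ih (fun X hX => hne X (by simp [hX])) hsort' hRtail hLtail
        have hQ'ne : Q' ≠ [] := by
          intro h; rw [h] at hlen; simp at hlen
        obtain ⟨Y, T, rfl⟩ := List.exists_cons_of_ne_nil hQ'ne
        refine ⟨B :: Y :: T, ?_, ?_, ?_, ?_, ?_, ?_⟩
        · simp only [List.flatten_cons] at hfl ⊢
          rw [hfl]
        · simpa using hlen
        · intro X hX
          rcases List.mem_cons.mp hX with h | h
          · exact h ▸ hBne
          · exact hne' X h
        · rw [List.isChain_cons_cons]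
          exact ⟨hhead B hRBC, hR'⟩
        · simp only [meas, List.flatten_cons] at hm' ⊢
          have : (Y :: T).flatten.length = (C :: rest).flatten.length := by
            rw [hfl]
          simp only [List.flatten_cons] at this
          omega
        · intro X h; exact h
      · -- move
        obtain ⟨hlen2, hstrict⟩ := not_Lc hLBC
        obtain ⟨q, C', rfl⟩ := List.exists_cons_of_ne_nil hCne
        have hC'ne : C' ≠ [] := by
          intro h; rw [h] at hlen2; simp at hlen2
        have hl' : (0:ℝ) < C'.length := lenR_pos hC'ne
        have hqC' : ∀ y ∈ C', q ≤ y := by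
          have : (q :: C').Pairwise (· ≤ ·) := by
            rw [hflat, List.pairwise_append] at hsort
            have := hsort.2.1
            simp only [List.flatten_cons] at this ⊢
            rw [List.pairwise_append] at this
            exact this.1
          exact fun y hy => (List.pairwise_cons.mp this).1 y hy
        have hBq : ∀ a ∈ B, a ≤ q := fun a ha =>
          hBle a ha q (by simp [List.flatten_cons])
        have hBsum : B.sum ≤ (B.length : ℝ) * q := by
          have := List.sum_le_card_nsmul B q hBq
          rw [nsmul_eq_mul] at this
          exact_mod_cast this
        have hstrict' : q - B.sum / (B.length : ℝ) < C'.sum / (C'.length : ℝ) - q := by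
          have heq : ((q :: C').sum - ((q :: C').length : ℝ) * (q :: C').headI)
              / (((q :: C').length : ℝ) - 1) = C'.sum / (C'.length : ℝ) - q := by
            simp only [List.sum_cons, List.length_cons, List.headI]
            push_cast
            rw [add_sub_cancel_right, div_eq_iff (ne_of_gt hl'), sub_mul, div_mul_cancel₀ _ (ne_of_gt hl')]
            ring
          rw [heq] at hstrict
          exact hstrict
        refine ⟨(B ++ [q]) :: C' :: rest, ?_, ?_, ?_, ?_, ?_, ?_⟩
        · simp [List.flatten_cons, List.append_assoc]
        · simp
        · intro X hX
          rcases List.mem_cons.mp hX with h | h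
          · subst h; simp
          · rcases List.mem_cons.mp h with h' | h'
            · exact h' ▸ hC'ne
            · exact hne X (by simp [h'])
        · rw [List.isChain_cons_cons]
          constructor
          · exact Rc_new hBne hstrict'
          · rw [List.isChain_cons] at hRtail ⊢
            exact ⟨fun y hy => Rc_shrink hC'ne hqC' (hRtail.1 y hy), hRtail.2⟩
        · simp only [meas, List.flatten_cons, List.length_append, List.length_cons]
          omega
        · intro X h
          simp only [List.headI]
          exact Rc_grow hBne hBsum h

lemma exists_stable_partition : ∀ (n : ℕ) (P : List (List ℝ)),
    meas P ≤ n → (∀ B ∈ P, B ≠ []) → P.flatten.Pairwise (· ≤ ·) → P.IsChain Rc →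
    ∃ Q : List (List ℝ),
      Q.flatten = P.flatten ∧ Q.length = P.length ∧ (∀ B ∈ Q, B ≠ []) ∧
      Q.IsChain Rc ∧ Q.IsChain Lc := by
  intro n
  induction n with
  | zero =>
    intro P hm hne hsort hR
    by_cases hL : P.IsChain Lc
    · exact ⟨P, rfl, rfl, hne, hR, hL⟩
    · obtain ⟨Q, _, _, _, _, hm', _⟩ := step P hne hsort hR hL
      omega
  | succ n ih =>
    intro P hm hne hsort hR
    by_cases hL : P.IsChain Lc
    · exact ⟨P, rfl, rfl, hne, hR, hL⟩
    · obtain ⟨Q, hfl, hlen, hne', hR', hm', _⟩ := step P hne hsort hR hL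
      obtain ⟨Q', h1, h2, h3, h4, h5⟩ := ih Q (by omega) hne' (hfl ▸ hsort) hR'
      exact ⟨Q', by rw [h1, hfl], by rw [h2, hlen], h3, h4, h5⟩


lemma chain_init (l : List ℝ) (T : List ℝ) :
    ((l.map fun x => [x]) ++ [T]).IsChain Rc := by
  induction l with
  | nil => simp
  | cons a l ih =>
    simp only [List.map_cons, List.cons_append]
    rw [List.isChain_cons]
    refine ⟨fun y _ => ?_, ih⟩
    intro h2
    simp at h2

lemma main_list (s : List ℝ) (k : ℕ) (hk : 1 ≤ k) (hks : k ≤ s.length)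
    (hsort : s.Pairwise (· ≤ ·)) :
    ∃ Q : List (List ℝ), Q.flatten = s ∧ Q.length = k ∧ (∀ B ∈ Q, B ≠ []) ∧
      Q.IsChain Rc ∧ Q.IsChain Lc := by
  set P : List (List ℝ) := ((s.take (k-1)).map fun x => [x]) ++ [s.drop (k-1)] with hP
  have hfl : P.flatten = s := by
    rw [hP]
    rw [List.flatten_append]
    have h1 : ((s.take (k-1)).map fun x => [x]).flatten = s.take (k-1) := by
      induction s.take (k-1) with
      | nil => simp
      | cons a l ih => simp [ih]
    rw [h1]
    simp [List.take_append_drop]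
  have hlen : P.length = k := by
    rw [hP]
    simp only [List.length_append, List.length_map, List.length_take, List.length_cons,
      List.length_nil]
    omega
  have hne : ∀ B ∈ P, B ≠ [] := by
    intro B hB
    rw [hP] at hB
    rcases List.mem_append.mp hB with h | h
    · obtain ⟨x, _, rfl⟩ := List.mem_map.mp h
      simp
    · simp only [List.mem_singleton] at h
      subst h
      have : s.drop (k-1) ≠ [] := by
        rw [← List.length_pos_iff]
        rw [List.length_drop]
        omega
      exact this
  have hR : P.IsChain Rc := chain_init _ _
  obtain ⟨Q, h1, h2, h3, h4, h5⟩ :=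
    exists_stable_partition (meas P) P le_rfl hne (by rw [hfl]; exact hsort) hR
  exact ⟨Q, by rw [h1, hfl], by rw [h2, hlen], h3, h4, h5⟩


lemma abs_sum_le_max {F : Finset ℝ} {x p : ℝ} (hx : x ∈ F) (hple : ∀ y ∈ F, y ≤ p) :
    ∑ y ∈ F, |x - y| ≤ ((F.card : ℝ) * p - ∑ y ∈ F, y) + ((F.card : ℝ) - 1) * (p - x) := by
  have hxp : x ≤ p := hple x hx
  have hcard : 1 ≤ F.card := Finset.card_pos.mpr ⟨x, hx⟩
  have hsplit : ∑ y ∈ F.erase x, |x - y| + |x - x| = ∑ y ∈ F, |x - y| :=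
    Finset.sum_erase_add F _ hx
  have hsplit2 : ∑ y ∈ F.erase x, (p - y) + (p - x) = ∑ y ∈ F, (p - y) :=
    Finset.sum_erase_add F _ hx
  have hbound : ∑ y ∈ F.erase x, |x - y| ≤ ∑ y ∈ F.erase x, ((p - y) + (p - x)) := by
    apply Finset.sum_le_sum
    intro y hy
    have hy' : y ≤ p := hple y (Finset.mem_of_mem_erase hy)
    rw [abs_sub_le_iff]
    constructor <;> linarith
  have hsum : ∑ y ∈ F.erase x, ((p - y) + (p - x))
      = (∑ y ∈ F.erase x, (p - y)) + ((F.card : ℝ) - 1) * (p - x) := by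
    rw [Finset.sum_add_distrib, Finset.sum_const, nsmul_eq_mul,
      Finset.card_erase_of_mem hx]
    congr 2
    push_cast [Nat.cast_sub hcard]
    ring
  have hSub : ∑ y ∈ F, (p - y) = (F.card : ℝ) * p - ∑ y ∈ F, y := by
    rw [Finset.sum_sub_distrib, Finset.sum_const, nsmul_eq_mul]
  have h0 : |x - x| = 0 := by simp
  linarith [hbound, hsum, hsplit, hsplit2, hSub]

lemma abs_sum_le_min {F : Finset ℝ} {x q : ℝ} (hx : x ∈ F) (hqle : ∀ y ∈ F, q ≤ y) :
    ∑ y ∈ F, |x - y| ≤ ((∑ y ∈ F, y) - (F.card : ℝ) * q) + ((F.card : ℝ) - 1) * (x - q) := by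
  have hxq : q ≤ x := hqle x hx
  have hcard : 1 ≤ F.card := Finset.card_pos.mpr ⟨x, hx⟩
  have hsplit : ∑ y ∈ F.erase x, |x - y| + |x - x| = ∑ y ∈ F, |x - y| :=
    Finset.sum_erase_add F _ hx
  have hsplit2 : ∑ y ∈ F.erase x, (y - q) + (x - q) = ∑ y ∈ F, (y - q) :=
    Finset.sum_erase_add F _ hx
  have hbound : ∑ y ∈ F.erase x, |x - y| ≤ ∑ y ∈ F.erase x, ((y - q) + (x - q)) := by
    apply Finset.sum_le_sum
    intro y hy
    have hy' : q ≤ y := hqle y (Finset.mem_of_mem_erase hy)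
    rw [abs_sub_le_iff]
    constructor <;> linarith
  have hsum : ∑ y ∈ F.erase x, ((y - q) + (x - q))
      = (∑ y ∈ F.erase x, (y - q)) + ((F.card : ℝ) - 1) * (x - q) := by
    rw [Finset.sum_add_distrib, Finset.sum_const, nsmul_eq_mul,
      Finset.card_erase_of_mem hx]
    congr 2
    push_cast [Nat.cast_sub hcard]
    ring
  have hSub : ∑ y ∈ F, (y - q) = (∑ y ∈ F, y) - (F.card : ℝ) * q := by
    rw [Finset.sum_sub_distrib, Finset.sum_const, nsmul_eq_mul]
  have h0 : |x - x| = 0 := by simp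
  linarith [hbound, hsum, hsplit, hsplit2, hSub]

lemma mean_le_mean {F G : Finset ℝ} (hF : F.Nonempty) (hG : G.Nonempty)
    (h : ∀ a ∈ F, ∀ b ∈ G, a ≤ b) :
    (∑ y ∈ F, y) / (F.card : ℝ) ≤ (∑ y ∈ G, y) / (G.card : ℝ) := by
  have hFc : (0:ℝ) < F.card := by exact_mod_cast Finset.card_pos.mpr hF
  have hGc : (0:ℝ) < G.card := by exact_mod_cast Finset.card_pos.mpr hG
  set b := G.min' hG with hb
  have hbG : b ∈ G := G.min'_mem hG
  have h1 : ∑ y ∈ F, y ≤ (F.card : ℝ) * b := by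
    have := Finset.sum_le_card_nsmul F id b (fun y hy => h y hy b hbG)
    rw [nsmul_eq_mul] at this
    simpa using this
  have h2 : (G.card : ℝ) * b ≤ ∑ y ∈ G, y := by
    have := Finset.card_nsmul_le_sum G id b (fun y hy => G.min'_le y hy)
    rw [nsmul_eq_mul] at this
    simpa using this
  calc (∑ y ∈ F, y) / (F.card : ℝ) ≤ b := by
        rw [div_le_iff₀ hFc]; linarith
    _ ≤ (∑ y ∈ G, y) / (G.card : ℝ) := by
        rw [le_div_iff₀ hGc]; linarith

lemma calc_right {F G : Finset ℝ} {x p μ1 : ℝ}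
    (hx : x ∈ F) (hple : ∀ y ∈ F, y ≤ p) (hm : 2 ≤ F.card)
    (hGne : G.Nonempty) (hG : ∀ y ∈ G, x ≤ y)
    (hRc : ((F.card : ℝ) * p - ∑ y ∈ F, y) / ((F.card : ℝ) - 1) ≤ μ1 - p)
    (hμ : μ1 ≤ (∑ y ∈ G, y) / (G.card : ℝ)) :
    (∑ y ∈ F, |x - y|) / ((F.card : ℝ) - 1) ≤ (∑ y ∈ G, |x - y|) / (G.card : ℝ) := by
  have hxp : x ≤ p := hple x hx
  have hm' : (2:ℝ) ≤ F.card := by exact_mod_cast hm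
  have hGc : (0:ℝ) < G.card := by exact_mod_cast Finset.card_pos.mpr hGne
  have h1 := abs_sum_le_max hx hple
  have hGsum : ∑ y ∈ G, |x - y| = (∑ y ∈ G, y) - (G.card : ℝ) * x := by
    have he : ∀ y ∈ G, |x - y| = y - x := by
      intro y hy
      rw [abs_sub_comm, abs_of_nonneg (by linarith [hG y hy])]
    rw [Finset.sum_congr rfl he, Finset.sum_sub_distrib, Finset.sum_const, nsmul_eq_mul]
  have hstep : (∑ y ∈ F, |x - y|) / ((F.card : ℝ) - 1)
      ≤ ((F.card : ℝ) * p - ∑ y ∈ F, y) / ((F.card : ℝ) - 1) + (p - x) := by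
    have hpos : (0:ℝ) < (F.card : ℝ) - 1 := by linarith
    have he : ((F.card : ℝ) * p - ∑ y ∈ F, y) / ((F.card : ℝ) - 1) + (p - x)
        = (((F.card : ℝ) * p - ∑ y ∈ F, y) + ((F.card : ℝ) - 1) * (p - x))
          / ((F.card : ℝ) - 1) := by
      field_simp
    rw [he]
    exact (div_le_div_iff_of_pos_right hpos).mpr h1
  have hfin : (∑ y ∈ G, |x - y|) / (G.card : ℝ)
      = (∑ y ∈ G, y) / (G.card : ℝ) - x := by
    rw [hGsum, sub_div, mul_div_cancel_left₀ _ (ne_of_gt hGc)]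
  rw [hfin]
  linarith

lemma calc_left {F G : Finset ℝ} {x q μ0 : ℝ}
    (hx : x ∈ F) (hqle : ∀ y ∈ F, q ≤ y) (hm : 2 ≤ F.card)
    (hGne : G.Nonempty) (hG : ∀ y ∈ G, y ≤ x)
    (hLc : ((∑ y ∈ F, y) - (F.card : ℝ) * q) / ((F.card : ℝ) - 1) ≤ q - μ0)
    (hμ : (∑ y ∈ G, y) / (G.card : ℝ) ≤ μ0) :
    (∑ y ∈ F, |x - y|) / ((F.card : ℝ) - 1) ≤ (∑ y ∈ G, |x - y|) / (G.card : ℝ) := by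
  have hxq : q ≤ x := hqle x hx
  have hm' : (2:ℝ) ≤ F.card := by exact_mod_cast hm
  have hGc : (0:ℝ) < G.card := by exact_mod_cast Finset.card_pos.mpr hGne
  have h1 := abs_sum_le_min hx hqle
  have hGsum : ∑ y ∈ G, |x - y| = (G.card : ℝ) * x - ∑ y ∈ G, y := by
    have he : ∀ y ∈ G, |x - y| = x - y := by
      intro y hy
      rw [abs_of_nonneg (by linarith [hG y hy])]
    rw [Finset.sum_congr rfl he, Finset.sum_sub_distrib, Finset.sum_const, nsmul_eq_mul]
  have hstep : (∑ y ∈ F, |x - y|) / ((F.card : ℝ) - 1)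
      ≤ ((∑ y ∈ F, y) - (F.card : ℝ) * q) / ((F.card : ℝ) - 1) + (x - q) := by
    have hpos : (0:ℝ) < (F.card : ℝ) - 1 := by linarith
    have he : ((∑ y ∈ F, y) - (F.card : ℝ) * q) / ((F.card : ℝ) - 1) + (x - q)
        = (((∑ y ∈ F, y) - (F.card : ℝ) * q) + ((F.card : ℝ) - 1) * (x - q))
          / ((F.card : ℝ) - 1) := by
      field_simp
    rw [he]
    exact (div_le_div_iff_of_pos_right hpos).mpr h1
  have hfin : (∑ y ∈ G, |x - y|) / (G.card : ℝ)
      = x - (∑ y ∈ G, y) / (G.card : ℝ) := by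
    rw [hGsum, sub_div, mul_div_cancel_left₀ _ (ne_of_gt hGc)]
  rw [hfin]
  linarith

lemma le_getLastD_of_sorted {l : List ℝ} (hl : l.Pairwise (· ≤ ·)) {y : ℝ} (hy : y ∈ l) :
    y ≤ l.getLastD 0 := by
  have hne : l ≠ [] := List.ne_nil_of_mem hy
  rw [List.getLastD_eq_getLast?, List.getLast?_eq_getLast hne, Option.getD_some]
  have hdecomp : l.dropLast ++ [l.getLast hne] = l := List.dropLast_append_getLast hne
  have hy' : y ∈ l.dropLast ++ [l.getLast hne] := by rw [hdecomp]; exact hy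
  have hl' : (l.dropLast ++ [l.getLast hne]).Pairwise (· ≤ ·) := by rw [hdecomp]; exact hl
  rw [List.pairwise_append] at hl'
  rcases List.mem_append.mp hy' with h | h
  · exact hl'.2.2 y h _ (by simp)
  · simp only [List.mem_singleton] at h
    rw [h]

lemma headI_le_of_sorted {l : List ℝ} (hl : l.Pairwise (· ≤ ·)) {y : ℝ} (hy : y ∈ l) :
    l.headI ≤ y := by
  cases l with
  | nil => simp at hy
  | cons a t =>
    rcases List.mem_cons.mp hy with h | h
    · rw [h]; rfl
    · exact (List.pairwise_cons.mp hl).1 y h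


end IPAux

/-- every finite set of points on the real line admits, for every
`1 ≤ k ≤ n`, an IP-stable `k`-clustering all of whose clusters are contiguous. -/
theorem ip_stable_clustering_exists_on_line
    (D : Finset ℝ) (k : ℕ) (hk1 : 1 ≤ k) (hkn : k ≤ D.card) :
    ∃ C : Fin k → Finset ℝ,
      IsClustering D C ∧
      (∀ x ∈ D, IPStablePt (fun a b => |a - b|) C x) ∧
      (∀ i : Fin k, ∀ a ∈ C i, ∀ b ∈ D, ∀ c ∈ C i, a ≤ b → b ≤ c → b ∈ C i) := by
  classical
  set s : List ℝ := D.sort (· ≤ ·) with hs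
  have hslt : s.Pairwise (· < ·) := (D.sortedLT_sort).pairwise
  have hsle : s.Pairwise (· ≤ ·) := D.pairwise_sort (· ≤ ·)
  have hlens : s.length = D.card := Finset.length_sort _
  obtain ⟨Q, hfl, hlenQ, hQne, hQR, hQL⟩ :=
    IPAux.main_list s k hk1 (by rw [hlens]; exact hkn) hsle
  have hsltQ : Q.flatten.Pairwise (· < ·) := by rw [hfl]; exact hslt
  have hpw := List.pairwise_flatten.mp hsltQ
  set BL : ℕ → List ℝ := fun t => Q.getD t [] with hBL
  have hBLeq : ∀ t (ht : t < k), BL t = Q[t]'(by rw [hlenQ]; exact ht) := by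
    intro t ht
    rw [hBL]
    exact List.getD_eq_getElem _ _ _
  have hBmem : ∀ t, t < k → BL t ∈ Q := by
    intro t ht
    rw [hBLeq t ht]
    exact List.getElem_mem _
  have hBne : ∀ t, t < k → BL t ≠ [] := fun t ht => hQne _ (hBmem t ht)
  have hBpw : ∀ t, t < k → (BL t).Pairwise (· < ·) := fun t ht => hpw.1 _ (hBmem t ht)
  have hBsorted : ∀ t, t < k → (BL t).Pairwise (· ≤ ·) := by
    intro t ht
    exact (hBpw t ht).imp (fun h => le_of_lt h)
  have hBnodup : ∀ t, t < k → (BL t).Nodup := by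
    intro t ht
    exact (hBpw t ht).nodup
  have hcross : ∀ t u, t < u → u < k → ∀ a ∈ BL t, ∀ b ∈ BL u, a < b := by
    intro t u htu hu
    have h := List.pairwise_iff_getElem.mp hpw.2 t u
      (by rw [hlenQ]; omega) (by rw [hlenQ]; exact hu) htu
    rw [hBLeq t (by omega), hBLeq u hu]
    exact h
  have hRadj : ∀ t, t + 1 < k → IPAux.Rc (BL t) (BL (t + 1)) := by
    intro t ht
    have h := List.isChain_iff_getElem.mp hQR t (by rw [hlenQ]; omega)
    rw [hBLeq t (by omega), hBLeq (t+1) ht]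
    simpa [List.get_eq_getElem] using h
  have hLadj : ∀ t, t + 1 < k → IPAux.Lc (BL t) (BL (t + 1)) := by
    intro t ht
    have h := List.isChain_iff_getElem.mp hQL t (by rw [hlenQ]; omega)
    rw [hBLeq t (by omega), hBLeq (t+1) ht]
    simpa [List.get_eq_getElem] using h
  -- membership transfer
  have hmemD : ∀ x : ℝ, x ∈ D ↔ ∃ t, ∃ _ : t < k, x ∈ BL t := by
    intro x
    constructor
    · intro hx
      have hx' : x ∈ Q.flatten := by
        rw [hfl, hs]
        exact (Finset.mem_sort _).mpr hx
      obtain ⟨B, hB, hxB⟩ := List.mem_flatten.mp hx'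
      obtain ⟨t, ht, rfl⟩ := List.mem_iff_getElem.mp hB
      refine ⟨t, by rw [hlenQ] at ht; exact ht, ?_⟩
      rw [hBLeq t (by rw [hlenQ] at ht; exact ht)]
      exact hxB
    · intro ⟨t, ht, hx⟩
      have : x ∈ Q.flatten := List.mem_flatten.mpr ⟨BL t, hBmem t ht, hx⟩
      rw [hfl, hs] at this
      exact (Finset.mem_sort _).mp this
  -- derived per-block finset facts
  have hcardeq : ∀ t, t < k → ((BL t).toFinset).card = (BL t).length := by
    intro t ht
    exact List.toFinset_card_of_nodup (hBnodup t ht)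
  have hsumeq : ∀ t, t < k → ∑ y ∈ (BL t).toFinset, y = (BL t).sum := by
    intro t ht
    rw [List.sum_toFinset _ (hBnodup t ht)]
    simp
  have hBfne : ∀ t, t < k → ((BL t).toFinset).Nonempty := by
    intro t ht
    obtain ⟨a, ha⟩ := List.exists_mem_of_ne_nil (BL t) (hBne t ht)
    exact ⟨a, List.mem_toFinset.mpr ha⟩
  have hmeanle : ∀ t u, t ≤ u → u < k →
      (BL t).sum / ((BL t).length : ℝ) ≤ (BL u).sum / ((BL u).length : ℝ) := by
    intro t u htu hu
    have ht : t < k := by omega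
    rcases eq_or_lt_of_le htu with rfl | hlt
    · exact le_refl _
    · have h := IPAux.mean_le_mean (F := (BL t).toFinset) (G := (BL u).toFinset)
        (hBfne t ht) (hBfne u hu)
        (fun a ha b hb => le_of_lt
          (hcross t u hlt hu a (List.mem_toFinset.mp ha) b (List.mem_toFinset.mp hb)))
      rw [hsumeq t ht, hsumeq u hu, hcardeq t ht, hcardeq u hu] at h
      exact h
  refine ⟨fun i => (BL i.val).toFinset, ⟨?_, ?_, ?_⟩, ?_, ?_⟩
  · intro i
    exact hBfne i.val i.isLt
  · intro i j hij
    rw [Finset.disjoint_left]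
    intro a hai haj
    have hv : i.val ≠ j.val := fun h => hij (Fin.ext h)
    rcases hv.lt_or_gt with h | h
    · exact absurd (hcross i.val j.val h j.isLt a (List.mem_toFinset.mp hai) a
        (List.mem_toFinset.mp haj)) (lt_irrefl a)
    · exact absurd (hcross j.val i.val h i.isLt a (List.mem_toFinset.mp haj) a
        (List.mem_toFinset.mp hai)) (lt_irrefl a)
  · ext x
    rw [Finset.mem_biUnion]
    constructor
    · rintro ⟨i, _, hx⟩
      exact (hmemD x).mpr ⟨i.val, i.isLt, List.mem_toFinset.mp hx⟩
    · intro hx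
      obtain ⟨t, ht, hxt⟩ := (hmemD x).mp hx
      exact ⟨⟨t, ht⟩, Finset.mem_univ _, List.mem_toFinset.mpr hxt⟩
  · -- stability
    intro x hxD
    intro i hxi
    set t := i.val with hti
    have ht : t < k := i.isLt
    have hxB : x ∈ BL t := List.mem_toFinset.mp hxi
    by_cases hc1 : ((BL t).toFinset).card = 1
    · left
      obtain ⟨a, ha⟩ := Finset.card_eq_one.mp hc1
      change x ∈ (BL t).toFinset at hxi
      change (BL t).toFinset = {x}
      simp only [ha] at hxi ⊢
      rw [Finset.mem_singleton] at hxi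
      rw [hxi]
    · right
      intro j hji
      have hij : j ≠ i := fun h => hji (by rw [h])
      have hvne : j.val ≠ t := fun h => hij (Fin.ext h)
      have hm2 : 2 ≤ ((BL t).toFinset).card := by
        have h1 : 1 ≤ ((BL t).toFinset).card := Finset.card_pos.mpr (hBfne t ht)
        omega
      have hm2' : 2 ≤ (BL t).length := by rw [← hcardeq t ht]; exact hm2
      have hGne := hBfne j.val j.isLt
      rcases hvne.lt_or_gt with hlt | hgt
      · -- j < i : compare to a cluster on the left
        have ht1 : t - 1 + 1 = t := by omega
        have hLc := hLadj (t-1) (by omega)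
        rw [ht1] at hLc
        have hLc' := hLc hm2'
        refine IPAux.calc_left (x := x) (q := (BL t).headI)
          (μ0 := (BL (t-1)).sum / ((BL (t-1)).length : ℝ))
          hxi (fun y hy => IPAux.headI_le_of_sorted (hBsorted t ht)
            (List.mem_toFinset.mp hy)) hm2 hGne
          (fun y hy => le_of_lt (hcross j.val t hlt ht y (List.mem_toFinset.mp hy) x hxB))
          ?_ ?_
        · rw [hsumeq t ht, hcardeq t ht]
          exact hLc'
        · have h := hmeanle j.val (t-1) (by omega) (by omega)
          rw [hsumeq j.val j.isLt, hcardeq j.val j.isLt]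
          exact h
      · -- i < j : compare to a cluster on the right
        have ht1 : t + 1 < k := by omega
        have hRc := hRadj t ht1 hm2'
        refine IPAux.calc_right (x := x) (p := (BL t).getLastD 0)
          (μ1 := (BL (t+1)).sum / ((BL (t+1)).length : ℝ))
          hxi (fun y hy => IPAux.le_getLastD_of_sorted (hBsorted t ht)
            (List.mem_toFinset.mp hy)) hm2 hGne
          (fun y hy => le_of_lt (hcross t j.val hgt j.isLt x hxB y (List.mem_toFinset.mp hy)))
          ?_ ?_
        · rw [hsumeq t ht, hcardeq t ht]
          exact hRc
        · have h := hmeanle (t+1) j.val (by omega) j.isLt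
          rw [hsumeq j.val j.isLt, hcardeq j.val j.isLt]
          exact h
  · -- contiguity
    intro i a ha b hbD c hc hab hbc
    obtain ⟨u, hu, hbu⟩ := (hmemD b).mp hbD
    have hai : a ∈ BL i.val := List.mem_toFinset.mp ha
    have hci : c ∈ BL i.val := List.mem_toFinset.mp hc
    rcases lt_trichotomy u i.val with h | h | h
    · have := hcross u i.val h i.isLt b hbu a hai
      linarith
    · rw [h] at hbu
      exact List.mem_toFinset.mpr hbu
    · have := hcross i.val u h hu c hci b hbu
      linarith
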